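/- Let m be a positive natural number and s : Fin m → ℝ with s i > 0 for all i. Define the Gini coefficient of a positive weight function w : Fin m → ℝ as G(w) = (∑_{i} ∑_{j} |w i − w j|) / (2 · m · ∑_{i} w i). Then G(fun i => Real.sqrt (s i)) ≤ G(s); that is, the Gini coefficient of the square-root stake weights is at most the Gini coefficient of the linear stake weights. -/
import Mathlib


open Finset

/-- The Gini coefficient of a weight function `w` on `m` validators, via the
mean-absolute-difference formula. -/
noncomputable def gini (m : ℕ) (w : Fin m → ℝ) : ℝ :=
  (∑ i, ∑ j, |w i - w j|) / (2 * m * ∑ i, w i)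

/-- Pointwise key inequality: the cyclic symmetrization of `|a-b| c (c-a-b)` is
nonpositive for nonnegative `a b c` (it equals `2·min·max·(min−max)`). -/
private lemma key3 (a b c : ℝ) (ha : 0 ≤ a) (hb : 0 ≤ b) (hc : 0 ≤ c) :
    |a - b| * (c * (c - a - b)) + |b - c| * (a * (a - b - c)) + |c - a| * (b * (b - c - a)) ≤ 0 := by
  rcases abs_cases (a - b) with ⟨e1, f1⟩ | ⟨e1, f1⟩ <;>
  rcases abs_cases (b - c) with ⟨e2, f2⟩ | ⟨e2, f2⟩ <;>
  rcases abs_cases (c - a) with ⟨e3, f3⟩ | ⟨e3, f3⟩ <;>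
  rw [e1, e2, e3] <;>
  nlinarith [mul_nonneg ha hb, mul_nonneg hb hc, mul_nonneg ha hc,
             mul_nonneg (mul_nonneg ha hb) hc, sq_nonneg (a-b), sq_nonneg (b-c), sq_nonneg (c-a)]

/-- Triple sums are invariant under cyclic rotation of the indices. -/
private lemma rot3 {m : ℕ} (G : Fin m → Fin m → Fin m → ℝ) :
    (∑ i, ∑ j, ∑ k, G j k i) = ∑ i, ∑ j, ∑ k, G i j k := by
  rw [Finset.sum_comm]
  exact Finset.sum_congr rfl fun j _ => Finset.sum_comm

/-- Lemma 2: the Gini coefficient of the square-root stake weights is at most the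
Gini coefficient of the linear stake weights. -/
theorem srsw_gini_le (m : ℕ) (hm : 0 < m) (s : Fin m → ℝ) (hs : ∀ i, 0 < s i) :
    gini m (fun i => Real.sqrt (s i)) ≤ gini m s := by
  haveI : Nonempty (Fin m) := Fin.pos_iff_nonempty.mp hm
  set u : Fin m → ℝ := fun i => Real.sqrt (s i) with hu_def
  have hu : ∀ i, 0 < u i := fun i => Real.sqrt_pos.mpr (hs i)
  have hsq : ∀ i, s i = u i ^ 2 := fun i => (Real.sq_sqrt (hs i).le).symm
  have hsum_u : 0 < ∑ i, u i := Finset.sum_pos (fun i _ => hu i) Finset.univ_nonempty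
  have hsum_s : 0 < ∑ i, s i := Finset.sum_pos (fun i _ => hs i) Finset.univ_nonempty
  have hm' : (0:ℝ) < (m:ℝ) := by exact_mod_cast hm
  unfold gini
  rw [div_le_div_iff₀ (by positivity) (by positivity)]
  -- the key triple sum
  have hT : (∑ i, ∑ j, ∑ k, |u i - u j| * (u k * (u k - u i - u j))) ≤ 0 := by
    set F : Fin m → Fin m → Fin m → ℝ :=
      fun i j k => |u i - u j| * (u k * (u k - u i - u j)) with hF
    have r1 : (∑ i, ∑ j, ∑ k, F j k i) = ∑ i, ∑ j, ∑ k, F i j k :=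
      rot3 (fun i j k => F i j k)
    have r2 : (∑ i, ∑ j, ∑ k, F k i j) = ∑ i, ∑ j, ∑ k, F i j k := by
      have := rot3 (fun i j k => F j k i)
      simpa using this.trans r1
    have hsum : (∑ i, ∑ j, ∑ k, (F i j k + F j k i + F k i j)) ≤ 0 := by
      refine Finset.sum_nonpos fun i _ => Finset.sum_nonpos fun j _ => Finset.sum_nonpos fun k _ => ?_
      exact key3 (u i) (u j) (u k) (hu i).le (hu j).le (hu k).le
    have hsplit : (∑ i, ∑ j, ∑ k, (F i j k + F j k i + F k i j))
        = (∑ i, ∑ j, ∑ k, F i j k) + (∑ i, ∑ j, ∑ k, F j k i) + (∑ i, ∑ j, ∑ k, F k i j) := by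
      simp [Finset.sum_add_distrib]
    rw [hsplit, r1, r2] at hsum
    linarith
  -- expand products into triple sums
  have e1 : (∑ i, ∑ j, |u i - u j|) * (∑ k, s k)
      = ∑ i, ∑ j, ∑ k, |u i - u j| * s k := by
    simp_rw [Finset.sum_mul, Finset.mul_sum]
  have e2 : (∑ i, ∑ j, |s i - s j|) * (∑ k, u k)
      = ∑ i, ∑ j, ∑ k, |s i - s j| * u k := by
    simp_rw [Finset.sum_mul, Finset.mul_sum]
  have hmain : (∑ i, ∑ j, |u i - u j|) * (∑ k, s k)
      ≤ (∑ i, ∑ j, |s i - s j|) * (∑ k, u k) := by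
    rw [← sub_nonpos, e1, e2, ← Finset.sum_sub_distrib]
    simp_rw [← Finset.sum_sub_distrib]
    have hpt : ∀ i j k : Fin m,
        |u i - u j| * s k - |s i - s j| * u k = |u i - u j| * (u k * (u k - u i - u j)) := by
      intro i j k
      have habs : |s i - s j| = |u i - u j| * (u i + u j) := by
        rw [hsq i, hsq j]
        have h2 : u i ^ 2 - u j ^ 2 = (u i - u j) * (u i + u j) := by ring
        rw [h2, abs_mul, abs_of_nonneg (by positivity : (0:ℝ) ≤ u i + u j)]
      rw [habs, hsq k]; ring
    simp_rw [hpt]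
    exact hT
  calc (∑ i, ∑ j, |u i - u j|) * (2 * ↑m * ∑ i, s i)
      = 2 * ↑m * ((∑ i, ∑ j, |u i - u j|) * (∑ k, s k)) := by ring
    _ ≤ 2 * ↑m * ((∑ i, ∑ j, |s i - s j|) * (∑ k, u k)) := by
        exact mul_le_mul_of_nonneg_left hmain (by positivity)
    _ = (∑ i, ∑ j, |s i - s j|) * (2 * ↑m * ∑ i, u i) := by ring
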